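/- Every simplicial tree with two or more facets has at least two distinct leaves. -/
import Mathlib


variable {V : Type*} [DecidableEq V]

/-- A facet complex: no facet contains another. -/
def IsFacetComplex (Δ : Finset (Finset V)) : Prop :=
  ∀ F ∈ Δ, ∀ G ∈ Δ, F ⊆ G → F = G

/-- `F` is a leaf of `Δ`. -/
def IsLeaf (Δ : Finset (Finset V)) (F : Finset V) : Prop :=
  F ∈ Δ ∧ (Δ = {F} ∨ ∃ G ∈ Δ.erase F, ∀ H ∈ Δ.erase F, H ∩ F ⊆ G ∩ F)

/-- `Δ` is a forest: every nonempty subset has a leaf. -/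
def IsForest (Δ : Finset (Finset V)) : Prop :=
  ∀ Γ ⊆ Δ, Γ.Nonempty → ∃ F, IsLeaf Γ F

/-- `Δ` is connected: any two facets are joined by a path of consecutively
intersecting facets. -/
def FCConnected (Δ : Finset (Finset V)) : Prop :=
  ∀ F ∈ Δ, ∀ G ∈ Δ,
    Relation.ReflTransGen (fun A B => A ∈ Δ ∧ B ∈ Δ ∧ (A ∩ B).Nonempty) F G

/-- A (simplicial) tree is a connected forest. -/
def IsTree (Δ : Finset (Finset V)) : Prop := FCConnected Δ ∧ IsForest Δ

/-- A cycle: a nonempty facet complex with no leaf, every nonempty proper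
subset of which has a leaf. -/
def IsCycle (Δ : Finset (Finset V)) : Prop :=
  Δ.Nonempty ∧ (¬ ∃ F, IsLeaf Δ F) ∧ ∀ Γ ⊂ Δ, Γ.Nonempty → ∃ F, IsLeaf Γ F

/-- Strong neighbors in `Δ`. -/
def StrongNeighbor (Δ : Finset (Finset V)) (F G : Finset V) : Prop :=
  F ∈ Δ ∧ G ∈ Δ ∧ F ≠ G ∧ ∀ H ∈ Δ, F ∩ G ⊆ H → H = F ∨ H = G

lemma leaf_lift (Δ : Finset (Finset V)) (F G L : Finset V) (hF : F ∈ Δ)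
    (hG : G ∈ Δ.erase F) (hGmax : ∀ H ∈ Δ.erase F, H ∩ F ⊆ G ∩ F)
    (hL : IsLeaf (Δ.erase F) L) (hLG : L ≠ G) (h2 : 2 ≤ (Δ.erase F).card) :
    IsLeaf Δ L := by
  obtain ⟨hLmem, hcase⟩ := hL
  rcases hcase with h1 | ⟨G'', hG'', hmax''⟩
  · rw [h1] at h2; simp at h2
  refine ⟨Finset.mem_of_mem_erase hLmem, Or.inr ⟨G'', ?_, ?_⟩⟩
  · have := Finset.mem_of_mem_erase (Finset.mem_of_mem_erase hG'')
    exact Finset.mem_erase.mpr ⟨(Finset.mem_erase.mp hG'').1, this⟩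
  · intro H hH
    obtain ⟨hHL, hHΔ⟩ := Finset.mem_erase.mp hH
    have hGmem : G ∈ (Δ.erase F).erase L :=
      Finset.mem_erase.mpr ⟨hLG.symm, hG⟩
    by_cases hHF : H = F
    · subst hHF
      intro x hx
      obtain ⟨hxH, hxL⟩ := Finset.mem_inter.mp hx
      have hxG : x ∈ G := by
        have := hGmax L hLmem (Finset.mem_inter.mpr ⟨hxL, hxH⟩)
        exact (Finset.mem_inter.mp this).1
      exact hmax'' G hGmem (Finset.mem_inter.mpr ⟨hxG, hxL⟩)
    · exact hmax'' H (Finset.mem_erase.mpr ⟨hHL, Finset.mem_erase.mpr ⟨hHF, hHΔ⟩⟩)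

lemma forest_two_leaves : ∀ Δ : Finset (Finset V), IsForest Δ → 2 ≤ Δ.card →
    ∃ F G, F ≠ G ∧ IsLeaf Δ F ∧ IsLeaf Δ G := by
  intro Δ
  induction Δ using Finset.strongInduction with
  | _ Δ ih =>
    intro hf hcard
    rcases eq_or_lt_of_le hcard with h2 | h3
    · obtain ⟨F, G, hFG, hΔeq⟩ := Finset.card_eq_two.mp h2.symm
      subst hΔeq
      refine ⟨F, G, hFG, ⟨by simp, Or.inr ⟨G, ?_, ?_⟩⟩, ⟨by simp, Or.inr ⟨F, ?_, ?_⟩⟩⟩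
      · simp [hFG.symm]
      · intro H hH
        simp only [Finset.mem_erase, Finset.mem_insert, Finset.mem_singleton] at hH
        rcases hH.2 with h | h <;> simp [h] at hH ⊢
      · simp [hFG]
      · intro H hH
        simp only [Finset.mem_erase, Finset.mem_insert, Finset.mem_singleton] at hH
        rcases hH.2 with h | h <;> simp [h] at hH ⊢
    · obtain ⟨F, hFmem, hFcase⟩ := hf Δ subset_rfl (Finset.card_pos.mp (by omega))
      rcases hFcase with h1 | ⟨G, hG, hGmax⟩
      · rw [h1] at hcard; simp at hcard
      have hΔ'card : 2 ≤ (Δ.erase F).card := by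
        rw [Finset.card_erase_of_mem hFmem]; omega
      have hf' : IsForest (Δ.erase F) := fun Γ hΓ hne =>
        hf Γ (hΓ.trans (Finset.erase_subset _ _)) hne
      obtain ⟨G₁, G₂, h12, hL1, hL2⟩ :=
        ih (Δ.erase F) (Finset.erase_ssubset hFmem) hf' hΔ'card
      by_cases hG1 : G₁ = G
      · have hG2 : G₂ ≠ G := fun h => h12 (hG1.trans h.symm)
        refine ⟨F, G₂, fun h => (Finset.mem_erase.mp hL2.1).1 h.symm, ?_, ?_⟩
        · exact ⟨hFmem, Or.inr ⟨G, hG, hGmax⟩⟩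
        · exact leaf_lift Δ F G G₂ hFmem hG hGmax hL2 hG2 hΔ'card
      · refine ⟨F, G₁, fun h => (Finset.mem_erase.mp hL1.1).1 h.symm, ?_, ?_⟩
        · exact ⟨hFmem, Or.inr ⟨G, hG, hGmax⟩⟩
        · exact leaf_lift Δ F G G₁ hFmem hG hGmax hL1 hG1 hΔ'card

theorem tree_has_two_leaves (Δ : Finset (Finset V)) (hΔ : IsFacetComplex Δ)
    (htree : IsTree Δ) (hcard : 2 ≤ Δ.card) :
    ∃ F G, F ≠ G ∧ IsLeaf Δ F ∧ IsLeaf Δ G :=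
  forest_two_leaves Δ htree.2 hcard
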